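/- Let V and V' be ℓ-dimensional linear subspaces of ℝ^{d+1} (1 ≤ ℓ ≤ d+1), let P_V and P_{V'} denote the orthogonal projections of ℝ^{d+1} onto V and V' respectively, and let ε > 0. If the operator norm satisfies ‖P_V − P_{V'}‖ < ε, then there exist orthonormal bases v_0,…,v_{ℓ−1} of V and v'_0,…,v'_{ℓ−1} of V' such that ‖v_j − v'_j‖ < √2·ε for every j = 0,…,ℓ−1. (Lemma 3.7, first part.) -/

import Mathlib

/-!
The real Grassmannian of `ℓ`-dimensional subspaces of `ℝ^{d+1}` is metrized by
`d(V,V') = ‖P_V − P_{V'}‖`, where `P_W` is the orthogonal projection onto `W`, viewed as a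
(continuous) linear endomorphism of `ℝ^{d+1}`, and `‖·‖` is the operator norm.
-/

noncomputable section

/-- `ℝ^{d+1}` with the standard inner product. -/
abbrev ER (d : ℕ) : Type := EuclideanSpace ℝ (Fin (d + 1))

/-- The orthogonal projection onto `V`, as an endomorphism of `ℝ^{d+1}`. -/
def projCLM {d : ℕ} (V : Submodule ℝ (ER d)) : ER d →L[ℝ] ER d :=
  V.subtypeL.comp V.orthogonalProjection

/-!
STATEMENT 13 (Lemma 3.7, first part). If `V, V'` are `ℓ`-dimensional subspaces of
`ℝ^{d+1}` (`1 ≤ ℓ ≤ d+1`) with `‖P_V − P_{V'}‖ < ε`, then there are orthonormal bases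
`v₀,…,v_{ℓ−1}` of `V` and `v'₀,…,v'_{ℓ−1}` of `V'` with `‖vⱼ − v'ⱼ‖ < √2·ε` for all `j`.
-/

open scoped RealInnerProductSpace

lemma aux_span {d ℓ : ℕ} (W : Submodule ℝ (ER d)) (f : Fin ℓ → ER d)
    (hf : Orthonormal ℝ f) (hmem : ∀ j, f j ∈ W) (hW : Module.finrank ℝ W = ℓ) :
    Submodule.span ℝ (Set.range f) = W := by
  have hle : Submodule.span ℝ (Set.range f) ≤ W := by
    rw [Submodule.span_le]; rintro x ⟨j, rfl⟩; exact hmem j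
  refine Submodule.eq_of_le_of_finrank_le hle ?_
  rw [hW, finrank_span_eq_card hf.linearIndependent]
  simp

lemma aux_selfadj {d : ℕ} (W : Submodule ℝ (ER d)) (x y : ER d) :
    ⟪projCLM W x, y⟫ = ⟪x, projCLM W y⟫ :=
  W.inner_starProjection_left_eq_right x y

lemma aux_proj_mem {d : ℕ} (W : Submodule ℝ (ER d)) {x : ER d} (hx : x ∈ W) :
    projCLM W x = x := by
  show ((W.orthogonalProjection x : W) : ER d) = x
  exact W.starProjection_eq_self_iff.mpr hx

lemma aux_idem {d : ℕ} (W : Submodule ℝ (ER d)) (x : ER d) :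
    projCLM W (projCLM W x) = projCLM W x :=
  aux_proj_mem W ((W.orthogonalProjection x) : W).2

lemma aux_inner_proj {d : ℕ} (W : Submodule ℝ (ER d)) (x y : ER d) :
    ⟪projCLM W x, projCLM W y⟫ = ⟪x, projCLM W y⟫ := by
  rw [aux_selfadj, aux_idem]

lemma aux_norm_lt {a b : ℝ} (hb : 0 ≤ b) (h : a ^ 2 < 2 * b ^ 2) (ha : 0 ≤ a) :
    a < Real.sqrt 2 * b := by
  have h2 : (Real.sqrt 2 * b) ^ 2 = 2 * b ^ 2 := by
    rw [mul_pow, Real.sq_sqrt (by norm_num : (0:ℝ) ≤ 2)]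
  exact lt_of_pow_lt_pow_left₀ 2 (by positivity) (by rw [h2]; exact h)

set_option maxHeartbeats 1000000 in
theorem stmt13 (d ℓ : ℕ) (hℓ1 : 1 ≤ ℓ) (hℓ2 : ℓ ≤ d + 1)
    (V V' : Submodule ℝ (ER d))
    (hV : Module.finrank ℝ V = ℓ) (hV' : Module.finrank ℝ V' = ℓ)
    (ε : ℝ) (hε : 0 < ε)
    (h : ‖projCLM V - projCLM V'‖ < ε) :
    ∃ v v' : Fin ℓ → ER d,
      Orthonormal ℝ v ∧ Submodule.span ℝ (Set.range v) = V ∧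
      Orthonormal ℝ v' ∧ Submodule.span ℝ (Set.range v') = V' ∧
      ∀ j : Fin ℓ, ‖v j - v' j‖ < Real.sqrt 2 * ε := by
  rcases le_or_gt ε 1 with hε1 | hε1
  · -- main case: ε ≤ 1
    set T : V →ₗ[ℝ] V :=
      (V.orthogonalProjection.comp ((projCLM V').comp V.subtypeL)).toLinearMap with hT
    have hTapp : ∀ x : V, ((T x : V) : ER d)
        = (V.orthogonalProjection (projCLM V' (x : ER d)) : ER d) := fun x => rfl
    have hTsym : T.IsSymmetric := by
      intro x y
      show ⟪projCLM V (projCLM V' (x : ER d)), (y : ER d)⟫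
          = ⟪(x : ER d), projCLM V (projCLM V' (y : ER d))⟫
      rw [aux_selfadj V, aux_proj_mem V y.2, aux_selfadj V', ← aux_selfadj V,
        aux_proj_mem V x.2]
    set e := hTsym.eigenvectorBasis hV with he
    set μ := hTsym.eigenvalues hV with hμ
    have heig : ∀ j, T (e j) = μ j • e j := fun j => hTsym.apply_eigenvectorBasis hV j
    set v : Fin ℓ → ER d := fun j => (e j : ER d) with hv
    have hvmem : ∀ j, v j ∈ V := fun j => (e j).2
    have hvon : Orthonormal ℝ v := e.orthonormal.comp_linearIsometry V.subtypeₗᵢ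
    have hvnorm : ∀ j, ‖v j‖ = 1 := fun j => hvon.1 j
    set s : Fin ℓ → ℝ := fun j => ‖projCLM V' (v j)‖ with hs
    have hdiff : ∀ j, ‖v j - projCLM V' (v j)‖ < ε := by
      intro j
      have h1 : v j - projCLM V' (v j) = (projCLM V - projCLM V') (v j) := by
        simp [aux_proj_mem V (hvmem j)]
      rw [h1]
      calc ‖(projCLM V - projCLM V') (v j)‖ ≤ ‖projCLM V - projCLM V'‖ * ‖v j‖ :=
            (projCLM V - projCLM V').le_opNorm _
        _ = ‖projCLM V - projCLM V'‖ := by rw [hvnorm j, mul_one]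
        _ < ε := h
    have hs_sq : ∀ j, 1 - ε ^ 2 < s j ^ 2 := by
      intro j
      have horth : ⟪projCLM V' (v j), v j - projCLM V' (v j)⟫ = 0 := by
        have hmem' : v j - projCLM V' (v j) ∈ V'ᗮ :=
          V'.sub_starProjection_mem_orthogonal (v j)
        exact ((Submodule.mem_orthogonal V' _).mp hmem' _
          ((V'.orthogonalProjection (v j) : V').2)).symm ▸ rfl
      have hpyth : ‖v j‖ ^ 2 = s j ^ 2 + ‖v j - projCLM V' (v j)‖ ^ 2 := by
        have h0 : v j = projCLM V' (v j) + (v j - projCLM V' (v j)) := by abel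
        have h1 := norm_add_sq_eq_norm_sq_add_norm_sq_real horth
        rw [← h0] at h1
        simpa [pow_two] using h1
      have h2 : ‖v j - projCLM V' (v j)‖ ^ 2 < ε ^ 2 := by
        have := hdiff j
        nlinarith [norm_nonneg (v j - projCLM V' (v j))]
      rw [hvnorm j] at hpyth
      nlinarith
    have hs_pos : ∀ j, 0 < s j := by
      intro j
      have := hs_sq j
      nlinarith [norm_nonneg (projCLM V' (v j)), hε, hε1]
    set v' : Fin ℓ → ER d := fun j => (s j)⁻¹ • projCLM V' (v j) with hv'
    have hv'mem : ∀ j, v' j ∈ V' := fun j =>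
      Submodule.smul_mem _ _ ((V'.orthogonalProjection (v j)) : V').2
    have hPsq : ∀ j, ⟪v j, projCLM V' (v j)⟫ = s j ^ 2 := by
      intro j
      rw [← aux_inner_proj, real_inner_self_eq_norm_sq]
    have hinner : ∀ i j, ⟪v i, projCLM V' (v j)⟫ = μ j * ⟪v i, v j⟫ := by
      intro i j
      have h1 : ⟪v i, projCLM V' (v j)⟫
          = ⟪v i, projCLM V (projCLM V' (v j))⟫ := by
        rw [← aux_selfadj V, aux_proj_mem V (hvmem i)]
      have h2 : projCLM V (projCLM V' (v j)) = ((μ j • e j : V) : ER d) := by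
        rw [← heig j]; rfl
      rw [h1, h2, Submodule.coe_smul, real_inner_smul_right]
    have hv'on : Orthonormal ℝ v' := by
      rw [orthonormal_iff_ite]
      intro i j
      show ⟪(s i)⁻¹ • projCLM V' (v i), (s j)⁻¹ • projCLM V' (v j)⟫ = _
      rw [real_inner_smul_left, real_inner_smul_right, aux_inner_proj, hinner i j]
      rcases eq_or_ne i j with rfl | hij
      · have h3 : ⟪v i, v i⟫ = 1 := by
          rw [real_inner_self_eq_norm_sq, hvnorm i]; norm_num
        rw [h3, if_pos rfl]
        have h4 : μ i = s i ^ 2 := by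
          have h5 := hinner i i
          rw [hPsq i, h3, mul_one] at h5
          exact h5.symm
        rw [h4]
        have := hs_pos i
        field_simp
      · rw [hvon.2 hij, if_neg hij]
        ring
    have hv'norm : ∀ j, ‖v' j‖ = 1 := fun j => hv'on.1 j
    refine ⟨v, v', hvon, aux_span V v hvon hvmem hV, hv'on,
      aux_span V' v' hv'on hv'mem hV', ?_⟩
    intro j
    have hiv : ⟪v j, v' j⟫ = s j := by
      show ⟪v j, (s j)⁻¹ • projCLM V' (v j)⟫ = s j
      rw [real_inner_smul_right, hPsq j]
      have := hs_pos j
      field_simp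
    have hnormsq : ‖v j - v' j‖ ^ 2 = 2 - 2 * s j := by
      rw [norm_sub_sq_real, hiv, hvnorm j, hv'norm j]; ring
    have hslb : 1 - ε ^ 2 < s j := by
      have h1 := hs_sq j
      have h2 := hs_pos j
      nlinarith
    have hfin : ‖v j - v' j‖ ^ 2 < 2 * ε ^ 2 := by rw [hnormsq]; nlinarith
    exact aux_norm_lt hε.le hfin (norm_nonneg _)
  · -- easy case: ε > 1
    set e := (stdOrthonormalBasis ℝ V).reindex (finCongr hV) with he
    set w := (stdOrthonormalBasis ℝ V').reindex (finCongr hV') with hw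
    set v : Fin ℓ → ER d := fun j => (e j : ER d) with hv
    set w0 : Fin ℓ → ER d := fun j => (w j : ER d) with hw0
    have hvon : Orthonormal ℝ v := e.orthonormal.comp_linearIsometry V.subtypeₗᵢ
    have hwon : Orthonormal ℝ w0 := w.orthonormal.comp_linearIsometry V'.subtypeₗᵢ
    set c : Fin ℓ → ℝ := fun j => if ⟪v j, w0 j⟫ < 0 then -1 else 1 with hc
    have hc2 : ∀ j, c j * c j = 1 := by
      intro j; rw [hc]; dsimp only; split <;> norm_num
    set v' : Fin ℓ → ER d := fun j => c j • w0 j with hv'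
    have hv'on : Orthonormal ℝ v' := by
      rw [orthonormal_iff_ite]
      intro i j
      show ⟪c i • w0 i, c j • w0 j⟫ = _
      rw [real_inner_smul_left, real_inner_smul_right]
      rcases eq_or_ne i j with rfl | hij
      · rw [if_pos rfl]
        have h3 : ⟪w0 i, w0 i⟫ = 1 := by
          rw [real_inner_self_eq_norm_sq, hwon.1 i]; norm_num
        rw [h3, mul_one, hc2 i]
      · rw [hwon.2 hij, if_neg hij]; ring
    have hv'mem : ∀ j, v' j ∈ V' := fun j => Submodule.smul_mem _ _ (w j).2
    have hvmem : ∀ j, v j ∈ V := fun j => (e j).2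
    refine ⟨v, v', hvon, aux_span V v hvon hvmem hV, hv'on,
      aux_span V' v' hv'on hv'mem hV', ?_⟩
    intro j
    have hge : 0 ≤ ⟪v j, v' j⟫ := by
      show 0 ≤ ⟪v j, c j • w0 j⟫
      rw [real_inner_smul_right, hc]
      dsimp only
      split
      · next hlt => nlinarith
      · next hlt => nlinarith [not_lt.mp hlt]
    refine aux_norm_lt hε.le ?_ (norm_nonneg _)
    have hthis : ‖v j - v' j‖ ^ 2 = 2 - 2 * ⟪v j, v' j⟫ := by
      rw [norm_sub_sq_real, hvon.1 j, hv'on.1 j]; ring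
    rw [hthis]
    nlinarith
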